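/- Let h be a g-symmetric endomorphism of V and let α, β ∈ V* be linear functionals. For t ∈ ℝ small enough that g_t(x, y) := g((Id + t h)(x), y) is an inner product, let g_t*(α, β) := α(♯_{g_t} β) denote the induced inner product on the dual space V*, where ♯_{g_t} β is the unique vector with g_t(♯_{g_t} β, x) = β(x) for all x. Then the function t ↦ g_t*(α, β) is differentiable at t = 0 with derivative −g*(α ∘ h, β), where g* is the dual inner product of g and α ∘ h denotes the functional x ↦ α(h(x)). -/

import Mathlib

open RealInnerProductSpace Filter

/-- first variation of the dual inner product. Let `h` be a
`g`-symmetric endomorphism, `α β` linear functionals, `bβ = ♯_g β` the vector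
representing `β` with respect to `g`, and for `t` near `0` let `s t = ♯_{g_t} β`
be the unique vector with `g_t(s t, x) = β x` for all `x`, where
`g_t(x,y) = g((Id + t h) x, y)`.  Then `t ↦ g_t*(α, β) = α (s t)` is
differentiable at `t = 0` with derivative `-g*(α ∘ h, β) = -α (h bβ)`. -/
theorem stmt_6 {V : Type*} [NormedAddCommGroup V] [InnerProductSpace ℝ V]
    [FiniteDimensional ℝ V]
    (h : Module.End ℝ V)
    (hsym : ∀ x y : V, ⟪h x, y⟫ = ⟪x, h y⟫)
    (α β : V →ₗ[ℝ] ℝ)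
    (bβ : V) (hbβ : ∀ x : V, ⟪bβ, x⟫ = β x)
    (s : ℝ → V)
    (hs : ∀ᶠ t in nhds (0 : ℝ), ∀ x : V, ⟪(1 + t • h) (s t), x⟫ = β x) :
    HasDerivAt (fun t : ℝ => α (s t)) (-(α (h bβ))) 0 := by
  have : CompleteSpace V := FiniteDimensional.complete ℝ V
  set h' : V →L[ℝ] V := LinearMap.toContinuousLinearMap h with hh'
  set α' : V →L[ℝ] ℝ := LinearMap.toContinuousLinearMap α with hα'
  set g : ℝ → (V →L[ℝ] V) := fun t => 1 + t • h' with hg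
  have hg0 : g 0 = 1 := by simp [hg]
  have hgd : HasDerivAt g h' 0 := by
    have := (hasDerivAt_const (0:ℝ) (1 : V →L[ℝ] V)).add
      ((hasDerivAt_id (0:ℝ)).smul_const h')
    simp only [zero_add, one_smul] at this
    exact this
  -- t ↦ Ring.inverse (g t) has derivative -h' at 0
  have hinv : HasDerivAt (fun t => Ring.inverse (g t)) (-h') 0 := by
    have h1 := hasFDerivAt_ringInverse (𝕜 := ℝ) (1 : (V →L[ℝ] V)ˣ)
    simp only [inv_one, Units.val_one] at h1
    rw [← hg0] at h1
    have := h1.comp_hasDerivAt 0 hgd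
    simp [hg0] at this
    exact this
  -- apply to bβ and compose with α'
  have happ : HasDerivAt (fun t => (Ring.inverse (g t)) bβ) (-(h' bβ)) 0 := by
    have := hinv.clm_apply (hasDerivAt_const (0:ℝ) bβ)
    simpa [hg0] using this
  have hαapp : HasDerivAt (fun t => α' ((Ring.inverse (g t)) bβ)) (-(α (h bβ))) 0 := by
    have := (α'.hasFDerivAt.comp_hasDerivAt 0 happ)
    simp [hα', hh'] at this
    exact this
  -- eventual equality
  have hunit : ∀ᶠ t in nhds (0:ℝ), IsUnit (g t) := by
    have : ContinuousAt g 0 := hgd.continuousAt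
    have := this.preimage_mem_nhds (Units.isOpen.mem_nhds (by simp [hg0]))
    filter_upwards [this] with t ht using ht
  have heq : (fun t : ℝ => α (s t)) =ᶠ[nhds 0] fun t => α' ((Ring.inverse (g t)) bβ) := by
    filter_upwards [hs, hunit] with t ht htu
    have hgs : g t (s t) = bβ := by
      apply ext_inner_right ℝ
      intro x
      rw [hbβ x, ← ht x]
      congr 1
    obtain ⟨u, hu⟩ := htu
    have hst : s t = Ring.inverse (g t) bβ := by
      rw [← hgs, ← hu, Ring.inverse_unit]
      have h2 : ((u⁻¹ : (V →L[ℝ] V)ˣ) : V →L[ℝ] V) * ↑u = 1 := by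
        rw [← Units.val_mul]; simp
      calc s t = ((↑u⁻¹ * ↑u : V →L[ℝ] V)) (s t) := by rw [h2]; rfl
        _ = (↑u⁻¹ : V →L[ℝ] V) ((↑u : V →L[ℝ] V) (s t)) := rfl
    simp [hst, hα']
  exact hαapp.congr_of_eventuallyEq heq
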